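/- Assume F : π → Matrix (Fin n) (Fin n) ℂ is bounded and satisfies condition (1.5): for every h ∈ π and every ε > 0 the set {g ∈ π | ‖F (h*g) − F g‖ ≥ ε} is finite. Then for every h ∈ π the commutator Φ_F ∘ L_h − L_h ∘ Φ_F is a compact operator on H = ℓ²(π; ℂⁿ). -/

import Mathlib

open scoped Matrix.Norms.L2Operator ENNReal

section Aux

variable {α : Type*} {E : α → Type*} [∀ i, NormedAddCommGroup (E i)]

lemma lp_norm_mono (f g : lp E 2) (h : ∀ i, ‖f i‖ ≤ ‖g i‖) : ‖f‖ ≤ ‖g‖ := by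
  have hp : 0 < (2 : ℝ≥0∞).toReal := by norm_num
  refine lp.norm_le_of_tsum_le hp (norm_nonneg g) ?_
  rw [lp.norm_rpow_eq_tsum hp g]
  exact Summable.tsum_le_tsum (fun i => Real.rpow_le_rpow (norm_nonneg _) (h i) hp.le)
    ((lp.memℓp f).summable hp) ((lp.memℓp g).summable hp)

variable [∀ i, NormedSpace ℂ (E i)] [DecidableEq α]

noncomputable def lpEvalCLM (i : α) : lp E 2 →L[ℂ] E i :=
  LinearMap.mkContinuous
    { toFun := fun f => f i
      map_add' := fun f g => by simp [lp.coeFn_add]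
      map_smul' := fun c f => by simp [lp.coeFn_smul] }
    1 (fun f => by
      show ‖f i‖ ≤ 1 * ‖f‖
      simpa using lp.norm_apply_le_norm (by norm_num : (2 : ℝ≥0∞) ≠ 0) f i)

@[simp] lemma lpEvalCLM_apply (i : α) (f : lp E 2) : lpEvalCLM (E := E) i f = f i := rfl

noncomputable def lpSingleCLM (i : α) : E i →L[ℂ] lp E 2 :=
  LinearMap.mkContinuous
    { toFun := fun a => lp.single 2 i a
      map_add' := fun a b => by
        apply lp.ext
        funext j
        by_cases hj : j = i
        · subst hj; simp [lp.single_apply, lp.coeFn_add]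
        · simp [lp.single_apply, hj, lp.coeFn_add]
      map_smul' := fun c a => by
        apply lp.ext
        funext j
        by_cases hj : j = i
        · subst hj; simp [lp.single_apply, lp.coeFn_smul]
        · simp [lp.single_apply, hj, lp.coeFn_smul] }
    1 (fun a => by
      have h := lp.norm_single (p := 2) (by norm_num) i a
      simpa [h] using le_refl ‖a‖)

@[simp] lemma lpSingleCLM_apply (i : α) (a : E i) :
    lpSingleCLM (E := E) i a = lp.single 2 i a := rfl

lemma isCompactOperator_of_finiteDim {M N : Type*} [NormedAddCommGroup M] [NormedSpace ℂ M]
    [NormedAddCommGroup N] [NormedSpace ℂ N] [FiniteDimensional ℂ N] (f : M →L[ℂ] N) :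
    IsCompactOperator f := by
  refine ⟨Metric.closedBall 0 ‖f‖, isCompact_closedBall _ _, ?_⟩
  refine Filter.mem_of_superset (Metric.closedBall_mem_nhds (0 : M) one_pos) ?_
  intro x hx
  simp only [Set.mem_preimage, Metric.mem_closedBall, dist_zero_right] at hx ⊢
  calc ‖f x‖ ≤ ‖f‖ * ‖x‖ := f.le_opNorm x
    _ ≤ ‖f‖ * 1 := mul_le_mul_of_nonneg_left hx (norm_nonneg f)
    _ = ‖f‖ := mul_one _

end Aux

/-- If `F : π → Matrix (Fin n) (Fin n) ℂ` is bounded and satisfies condition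
(1.5) (`‖F(hg) − F(g)‖ → 0` as `|g| → ∞`), then the multiplication operator `Φ_F` on
`ℓ²(π; ℂⁿ)` commutes with every left-translation operator `L_h` modulo compact operators. -/
theorem multiplication_operator_commutator_compact
    {π : Type*} [Group π] {n : ℕ}
    (F : π → Matrix (Fin n) (Fin n) ℂ)
    (hbd : ∃ C : ℝ, ∀ g : π, ‖F g‖ ≤ C)
    (h15 : ∀ h : π, ∀ ε : ℝ, 0 < ε → {g : π | ε ≤ ‖F (h * g) - F g‖}.Finite)
    (Φ : lp (fun _ : π => EuclideanSpace ℂ (Fin n)) 2 →L[ℂ]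
         lp (fun _ : π => EuclideanSpace ℂ (Fin n)) 2)
    (hΦ : ∀ (ξ : lp (fun _ : π => EuclideanSpace ℂ (Fin n)) 2) (g : π),
      Φ ξ g = (F g).mulVec (ξ g))
    (L : π → (lp (fun _ : π => EuclideanSpace ℂ (Fin n)) 2 →L[ℂ]
              lp (fun _ : π => EuclideanSpace ℂ (Fin n)) 2))
    (hL : ∀ (h : π) (ξ : lp (fun _ : π => EuclideanSpace ℂ (Fin n)) 2) (g : π),
      L h ξ g = ξ (h⁻¹ * g)) :
    ∀ h : π, IsCompactOperator (Φ ∘L L h - L h ∘L Φ) := by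
  classical
  intro h
  set K : lp (fun _ : π => EuclideanSpace ℂ (Fin n)) 2 →L[ℂ]
      lp (fun _ : π => EuclideanSpace ℂ (Fin n)) 2 := Φ ∘L L h - L h ∘L Φ with hK
  -- pointwise formula for the commutator
  have kapp : ∀ (ξ : lp (fun _ : π => EuclideanSpace ℂ (Fin n)) 2) (g : π),
      K ξ g = (EuclideanSpace.equiv (Fin n) ℂ).symm
        ((F g - F (h⁻¹ * g)).mulVec (ξ (h⁻¹ * g))) := by
    intro ξ g
    have h1 : K ξ = Φ (L h ξ) - L h (Φ ξ) := by
      simp [hK, ContinuousLinearMap.sub_apply, ContinuousLinearMap.comp_apply]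
    have h2 : K ξ g = Φ (L h ξ) g - L h (Φ ξ) g := by
      rw [h1, lp.coeFn_sub]; rfl
    rw [h2, hL h (Φ ξ)]
    apply WithLp.ofLp_injective
    rw [WithLp.ofLp_sub, hΦ, hΦ, hL]
    rw [← Matrix.sub_mulVec]
    rfl
  -- it suffices to show K is in the closure of the compact operators
  suffices hcl : K ∈ closure { T : lp (fun _ : π => EuclideanSpace ℂ (Fin n)) 2 →L[ℂ]
      lp (fun _ : π => EuclideanSpace ℂ (Fin n)) 2 | IsCompactOperator T } by
    exact isClosed_setOf_isCompactOperator.closure_subset hcl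
  rw [Metric.mem_closure_iff]
  intro δ hδ
  set ε : ℝ := δ / (2 * (‖L h‖ + 1)) with hε
  have hLpos : (0:ℝ) < ‖L h‖ + 1 := by positivity
  have hεpos : 0 < ε := by positivity
  -- the finite exceptional set
  set S : Finset π := ((h15 h ε hεpos).toFinset).image (fun g => h * g) with hS
  have hSc : ∀ g : π, g ∉ S → ‖F g - F (h⁻¹ * g)‖ < ε := by
    intro g hg
    by_contra hcon
    push_neg at hcon
    apply hg
    rw [hS, Finset.mem_image]
    refine ⟨h⁻¹ * g, ?_, by group⟩
    rw [Set.Finite.mem_toFinset]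
    show ε ≤ ‖F (h * (h⁻¹ * g)) - F (h⁻¹ * g)‖
    rwa [mul_inv_cancel_left]
  -- the finite-rank approximation
  set T : lp (fun _ : π => EuclideanSpace ℂ (Fin n)) 2 →L[ℂ]
      lp (fun _ : π => EuclideanSpace ℂ (Fin n)) 2 :=
    ∑ g ∈ S, lpSingleCLM (E := fun _ : π => EuclideanSpace ℂ (Fin n)) g ∘L
      (lpEvalCLM (E := fun _ : π => EuclideanSpace ℂ (Fin n)) g ∘L K) with hT
  have hTcompact : IsCompactOperator T := by
    rw [hT]
    induction S using Finset.induction with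
    | empty => simpa using isCompactOperator_zero
    | @insert a s ha ih =>
      rw [Finset.sum_insert ha]
      have h1 : IsCompactOperator
          (lpSingleCLM (E := fun _ : π => EuclideanSpace ℂ (Fin n)) a ∘L
            (lpEvalCLM (E := fun _ : π => EuclideanSpace ℂ (Fin n)) a ∘L K)) := by
        have h2 := isCompactOperator_of_finiteDim
          (lpEvalCLM (E := fun _ : π => EuclideanSpace ℂ (Fin n)) a ∘L K)
        have h3 := h2.clm_comp (lpSingleCLM (E := fun _ : π => EuclideanSpace ℂ (Fin n)) a)
        exact h3
      have := h1.add ih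
      simpa [ContinuousLinearMap.coe_add', ContinuousLinearMap.coe_sum', ContinuousLinearMap.coe_comp'] using this
  refine ⟨T, hTcompact, ?_⟩
  -- the norm estimate
  have hTapp : ∀ (ξ : lp (fun _ : π => EuclideanSpace ℂ (Fin n)) 2) (g : π),
      T ξ g = if g ∈ S then K ξ g else 0 := by
    intro ξ g
    rw [hT]
    rw [ContinuousLinearMap.sum_apply]
    rw [lp.coeFn_sum]
    simp only [Finset.sum_apply, ContinuousLinearMap.comp_apply, lpSingleCLM_apply,
      lpEvalCLM_apply, lp.single_apply]
    rw [Finset.sum_pi_single]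
  have key : ∀ ξ : lp (fun _ : π => EuclideanSpace ℂ (Fin n)) 2,
      ‖(K - T) ξ‖ ≤ (ε * ‖L h‖) * ‖ξ‖ := by
    intro ξ
    have hdom : ∀ g : π, ‖(K - T) ξ g‖ ≤ ‖((ε : ℂ) • (L h ξ)) g‖ := by
      intro g
      have hsub : (K - T) ξ g = K ξ g - T ξ g := by
        rw [ContinuousLinearMap.sub_apply, lp.coeFn_sub]; rfl
      rw [hsub, hTapp]
      by_cases hg : g ∈ S
      · simp [hg, norm_nonneg]
      · rw [if_neg hg, sub_zero, kapp]
        have hmv := Matrix.l2_opNorm_mulVec (F g - F (h⁻¹ * g)) (ξ (h⁻¹ * g))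
        have hsm : ‖((ε : ℂ) • (L h ξ)) g‖ = ε * ‖ξ (h⁻¹ * g)‖ := by
          rw [lp.coeFn_smul, Pi.smul_apply, norm_smul, Complex.norm_real,
            Real.norm_eq_abs, abs_of_pos hεpos, hL]
        rw [hsm]
        calc ‖(EuclideanSpace.equiv (Fin n) ℂ).symm
              ((F g - F (h⁻¹ * g)).mulVec (ξ (h⁻¹ * g)))‖
            ≤ ‖F g - F (h⁻¹ * g)‖ * ‖ξ (h⁻¹ * g)‖ := hmv
          _ ≤ ε * ‖ξ (h⁻¹ * g)‖ :=
            mul_le_mul_of_nonneg_right (hSc g hg).le (norm_nonneg _)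
    have h1 : ‖(K - T) ξ‖ ≤ ‖(ε : ℂ) • (L h ξ)‖ := lp_norm_mono _ _ hdom
    have h2 : ‖(ε : ℂ) • (L h ξ)‖ = ε * ‖L h ξ‖ := by
      rw [norm_smul, Complex.norm_real, Real.norm_eq_abs, abs_of_pos hεpos]
    have h3 : ‖L h ξ‖ ≤ ‖L h‖ * ‖ξ‖ := (L h).le_opNorm ξ
    calc ‖(K - T) ξ‖ ≤ ε * ‖L h ξ‖ := by rw [← h2]; exact h1
      _ ≤ ε * (‖L h‖ * ‖ξ‖) := mul_le_mul_of_nonneg_left h3 hεpos.le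
      _ = (ε * ‖L h‖) * ‖ξ‖ := by ring
  have hnorm : ‖K - T‖ ≤ ε * ‖L h‖ :=
    ContinuousLinearMap.opNorm_le_bound _ (by positivity) key
  rw [dist_eq_norm]
  calc ‖K - T‖ ≤ ε * ‖L h‖ := hnorm
    _ < δ := by
      rw [hε]
      rw [div_mul_eq_mul_div, div_lt_iff₀ (by positivity)]
      nlinarith [norm_nonneg (L h), hδ]
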